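/- Let ξ₁ ≠ ξ₂ and k₁ ≠ k₂ be real constants, and set η₁ = -ξ₂ + (k₁² - k₂²)/(ξ₁ - ξ₂) and η₂ = -ξ₁ + (k₁² - k₂²)/(ξ₁ - ξ₂). Then the simple factors satisfy r_{η₂,k₂}(λ)·r_{ξ₁,k₁}(λ) = r_{η₁,k₁}(λ)·r_{ξ₂,k₂}(λ) for all λ. -/
import Mathlib

/-- The simple factor `r_{ξ,k}(λ)`. -/
noncomputable def simpleFactor (ξ k lam : ℝ) : Matrix (Fin 2) (Fin 2) ℝ :=
  !![ξ, ξ ^ 2 - k ^ 2 + lam; 1, ξ]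

/-- Permutability relation for simple factors:
`r_{η₂,k₂} r_{ξ₁,k₁} = r_{η₁,k₁} r_{ξ₂,k₂}`. -/
theorem simpleFactor_permutability
    (ξ₁ ξ₂ k₁ k₂ : ℝ) (hξ : ξ₁ ≠ ξ₂) (hk : k₁ ≠ k₂)
    (η₁ η₂ : ℝ)
    (hη₁ : η₁ = -ξ₂ + (k₁ ^ 2 - k₂ ^ 2) / (ξ₁ - ξ₂))
    (hη₂ : η₂ = -ξ₁ + (k₁ ^ 2 - k₂ ^ 2) / (ξ₁ - ξ₂)) :
    ∀ lam : ℝ, simpleFactor η₂ k₂ lam * simpleFactor ξ₁ k₁ lam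
      = simpleFactor η₁ k₁ lam * simpleFactor ξ₂ k₂ lam := by
  intro lam
  have hne : ξ₁ - ξ₂ ≠ 0 := sub_ne_zero.mpr hξ
  subst hη₁ hη₂
  simp only [simpleFactor, Matrix.mul_fin_two]
  congr 1 <;> field_simp <;> ring
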